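/- If n is even, then for every nonempty subset S of X there exists a profile u such that the set of Copeland winners at u is exactly S. -/

import Mathlib

open Finset

/-- `x` defeats `y` by simple majority at `u`:
`|{i : x ≻_{u(i)} y}| > |{i : y ≻_{u(i)} x}|`.  A profile assigns to each
individual `i` a rank equivalence `u i : Fin m ≃ Fin m` (lower rank = better),
so `i` prefers `x` to `y` iff `(u i) x < (u i) y`. -/
def defeats {m n : ℕ} (u : Fin n → (Fin m ≃ Fin m)) (x y : Fin m) : Prop :=
  (univ.filter (fun i : Fin n => (u i) y < (u i) x)).card <
    (univ.filter (fun i : Fin n => (u i) x < (u i) y)).card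

instance {m n : ℕ} (u : Fin n → (Fin m ≃ Fin m)) : DecidableRel (defeats u) :=
  fun _ _ => by unfold defeats; infer_instance

/-- The Copeland score of `x` at `u`: the number of alternatives `x` defeats
by simple majority. -/
def copelandScore {m n : ℕ} (u : Fin n → (Fin m ≃ Fin m)) (x : Fin m) : ℕ :=
  (univ.filter (fun y : Fin m => defeats u x y)).card

/-- The Copeland correspondence `G_C(u)`: alternatives with maximal Copeland
score. -/
def copelandSet {m n : ℕ} (u : Fin n → (Fin m ≃ Fin m)) : Finset (Fin m) :=
  univ.filter (fun x => ∀ z : Fin m, copelandScore u z ≤ copelandScore u x)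

/-! ### Auxiliary material -/

/-- Reversal within the first `k` positions and within the rest. -/
def blockRevFun (m k : ℕ) (hk : k ≤ m) : Fin m → Fin m :=
  fun i => if h : (i : ℕ) < k then ⟨k - 1 - i, by have := i.is_lt; omega⟩
           else ⟨m + k - 1 - i, by have := i.is_lt; omega⟩

lemma blockRev_invol (m k : ℕ) (hk : k ≤ m) :
    Function.Involutive (blockRevFun m k hk) := by
  intro i
  have hi := i.is_lt
  apply Fin.ext
  unfold blockRevFun
  rcases lt_or_ge (i : ℕ) k with h | h
  · rw [dif_pos h, dif_pos (show k - 1 - (i : ℕ) < k from by omega)]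
    simp only [Fin.val_mk]
    omega
  · rw [dif_neg (not_lt.mpr h), dif_neg (show ¬ (m + k - 1 - (i : ℕ) < k) from by omega)]
    simp only [Fin.val_mk]
    omega

def blockRev (m k : ℕ) (hk : k ≤ m) : Fin m ≃ Fin m :=
  (blockRev_invol m k hk).toPerm _

lemma blockRev_lt (m k : ℕ) (hk : k ≤ m) (i j : Fin m) :
    ((i : ℕ) < j ∧ (blockRev m k hk i : ℕ) < blockRev m k hk j) ↔
      ((i : ℕ) < k ∧ k ≤ (j : ℕ)) := by
  have hi := i.is_lt; have hj := j.is_lt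
  simp only [blockRev, Function.Involutive.coe_toPerm, blockRevFun]
  split_ifs <;> simp <;> omega

lemma filter_val_lt_card (n h : ℕ) (hh : h ≤ n) :
    (univ.filter fun i : Fin n => (i : ℕ) < h).card = h := by
  have : (univ.filter fun i : Fin n => (i : ℕ) < h)
      = (univ : Finset (Fin h)).map (Fin.castLEEmb hh) := by
    ext i
    simp only [mem_filter, mem_univ, true_and, mem_map, Fin.castLEEmb, Fin.castLE]
    constructor
    · intro hi; exact ⟨⟨i, hi⟩, by simp⟩
    · rintro ⟨j, rfl⟩; exact j.is_lt
  rw [this, card_map, card_univ, Fintype.card_fin]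

lemma filter_val_ge_card (n h : ℕ) (hh : h ≤ n) :
    (univ.filter fun i : Fin n => h ≤ (i : ℕ)).card = n - h := by
  have h1 := filter_val_lt_card n h hh
  have h2 := Finset.card_filter_add_card_filter_not
    (s := (univ : Finset (Fin n))) (p := fun i : Fin n => (i : ℕ) < h)
  simp only [card_univ, Fintype.card_fin, not_lt] at h2
  omega

lemma card_filter_ite (n h : ℕ) (hh : h ≤ n) (A B : Prop) [Decidable A] [Decidable B] :
    (univ.filter fun i : Fin n => if (i : ℕ) < h then A else B).card
      = (if A then h else 0) + (if B then n - h else 0) := by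
  have key : (univ.filter fun i : Fin n => if (i : ℕ) < h then A else B)
      = (univ.filter fun i : Fin n => ((i:ℕ) < h ∧ A) ∨ (h ≤ (i:ℕ) ∧ B)) := by
    apply filter_congr; intro i _
    split_ifs with hc
    · simp [hc, not_le.mpr hc]
    · simp [hc, Nat.le_of_not_lt hc]
  rw [key]
  have hdisj : Disjoint (univ.filter fun i : Fin n => (i:ℕ) < h ∧ A)
      (univ.filter fun i : Fin n => h ≤ (i:ℕ) ∧ B) := by
    rw [disjoint_filter]
    intro i _ ⟨h1, _⟩ ⟨h2, _⟩; omega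
  rw [filter_or, card_union_of_disjoint hdisj]
  congr 1
  · by_cases hA : A
    · simp [hA, filter_val_lt_card n h hh]
    · simp [hA]
  · by_cases hB : B
    · simp [hB, filter_val_ge_card n h hh]
    · simp [hB]

/-- There is a permutation of `Fin m` putting the members of `S` exactly in
the first `S.card` positions. -/
lemma exists_perm_finset_first (m : ℕ) (S : Finset (Fin m)) :
    ∃ v : Fin m ≃ Fin m, ∀ x, x ∈ S ↔ (v x : ℕ) < S.card := by
  classical
  set k := S.card with hk
  have hkm : k ≤ m := by simpa using S.card_le_univ
  have hc : Sᶜ.card = m - k := by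
    rw [Finset.card_compl]; simp [hk]
  let e1 : {x // x ∈ S} ⊕ {x // x ∉ S} ≃ Fin m := Equiv.sumCompl (· ∈ S)
  let e2 : {x // x ∉ S} ≃ {x // x ∈ Sᶜ} := Equiv.subtypeEquivRight (by simp)
  let e3 : {x // x ∈ S} ≃ Fin k := S.equivFin
  let e4 : {x // x ∈ Sᶜ} ≃ Fin (m - k) := (Sᶜ.equivFin).trans (finCongr hc)
  let v : Fin m ≃ Fin m :=
    e1.symm.trans ((e3.sumCongr (e2.trans e4)).trans
      (finSumFinEquiv.trans (finCongr (by omega))))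
  refine ⟨v, fun x => ?_⟩
  by_cases hx : x ∈ S
  · simp only [v, e1, Equiv.trans_apply, Equiv.sumCompl_symm_apply_of_pos hx]
    simp [finSumFinEquiv, hx]
  · simp only [v, e1, Equiv.trans_apply, Equiv.sumCompl_symm_apply_of_neg hx]
    simp [finSumFinEquiv, hx]

/-- If `n` is even, every nonempty subset of `X` is in the range of the
Copeland correspondence. -/
theorem copeland_range_even (m n : ℕ) (hm : 3 ≤ m) (hn : 2 ≤ n) (hne : Even n)
    (S : Finset (Fin m)) (hS : S.Nonempty) :
    ∃ u : Fin n → (Fin m ≃ Fin m), copelandSet u = S := by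
  classical
  set k := S.card with hk
  have hkm : k ≤ m := by simpa using S.card_le_univ
  obtain ⟨v1, hv1⟩ := exists_perm_finset_first m S
  rw [← hk] at hv1
  set r := blockRev m k hkm with hr
  set v2 := v1.trans r with hv2
  set hlf := n / 2 with hhalf
  have hdev : n = hlf + hlf := by obtain ⟨t, ht⟩ := hne; omega
  have hh1 : 1 ≤ hlf := by omega
  have hhn : hlf ≤ n := by omega
  set u : Fin n → (Fin m ≃ Fin m) := fun i => if (i : ℕ) < hlf then v1 else v2 with hu
  refine ⟨u, ?_⟩
  -- cardinality of the two camps of voters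
  have hcard : ∀ a b : Fin m,
      (univ.filter fun i : Fin n => (u i) a < (u i) b).card
        = (if v1 a < v1 b then hlf else 0) + (if v2 a < v2 b then n - hlf else 0) := by
    intro a b
    rw [← card_filter_ite n hlf hhn (v1 a < v1 b) (v2 a < v2 b)]
    congr 1
    apply filter_congr
    intro i _
    simp only [hu]
    split_ifs <;> exact Iff.rfl
  -- characterization of defeat
  have hdef : ∀ x y : Fin m, defeats u x y ↔ ((v1 x : ℕ) < k ∧ k ≤ (v1 y : ℕ)) := by
    intro x y
    have key : defeats u x y ↔ (v1 x < v1 y ∧ v2 x < v2 y) := by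
      unfold defeats
      rw [hcard x y, hcard y x]
      rcases lt_trichotomy (v1 x) (v1 y) with h | h | h
      · have h' : ¬ v1 y < v1 x := asymm h
        rcases lt_trichotomy (v2 x) (v2 y) with h2 | h2 | h2
        · simp only [if_pos h, if_neg h', if_pos h2, if_neg (asymm h2)]
          simp [h, h2]; omega
        · cases v2.injective h2
          exact absurd h (lt_irrefl _)
        · simp only [if_pos h, if_neg h', if_neg (asymm h2), if_pos h2]
          simp [h, asymm h2]; omega
      · cases v1.injective h
        simp [lt_irrefl]
      · have h' : ¬ v1 x < v1 y := asymm h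
        rcases lt_trichotomy (v2 x) (v2 y) with h2 | h2 | h2
        · simp only [if_pos h, if_neg h', if_pos h2, if_neg (asymm h2)]
          simp [h', h2]; omega
        · cases v2.injective h2
          exact absurd h (lt_irrefl _)
        · simp only [if_pos h, if_neg h', if_neg (asymm h2), if_pos h2]
          simp [h']
    rw [key]
    simp only [hv2, Equiv.trans_apply, Fin.lt_def]
    exact blockRev_lt m k hkm (v1 x) (v1 y)
  -- the Copeland scores
  have hscore : ∀ x : Fin m, copelandScore u x = if x ∈ S then m - k else 0 := by
    intro x
    unfold copelandScore
    by_cases hx : x ∈ S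
    · have hxk : (v1 x : ℕ) < k := (hv1 x).mp hx
      have hfil : (univ.filter fun y : Fin m => defeats u x y)
          = univ.filter (fun y : Fin m => k ≤ (v1 y : ℕ)) := by
        apply filter_congr; intro y _
        simp [hdef x y, hxk]
      rw [hfil, if_pos hx]
      have hmap : univ.filter (fun y : Fin m => k ≤ (v1 y : ℕ))
          = (univ.filter fun j : Fin m => k ≤ (j : ℕ)).map v1.symm.toEmbedding := by
        ext y
        simp only [mem_filter, mem_univ, true_and, mem_map, Equiv.coe_toEmbedding]
        constructor
        · intro hy; exact ⟨v1 y, hy, by simp⟩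
        · rintro ⟨j, hj, rfl⟩; simpa using hj
      rw [hmap, card_map, filter_val_ge_card m k hkm]
    · have hxk : ¬ (v1 x : ℕ) < k := fun h => hx ((hv1 x).mpr h)
      have hfil : (univ.filter fun y : Fin m => defeats u x y) = ∅ := by
        rw [filter_eq_empty_iff]
        intro y _
        rw [hdef x y]
        tauto
      rw [hfil, if_neg hx, card_empty]
  -- conclusion
  ext x
  simp only [copelandSet, mem_filter, mem_univ, true_and]
  constructor
  · intro h
    by_contra hx
    have hklt : k < m := by
      have hss : S ⊂ univ := ssubset_univ_iff.mpr (fun he => hx (he ▸ mem_univ x))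
      have := card_lt_card hss
      simpa [← hk] using this
    obtain ⟨s, hs⟩ := hS
    have h1 := h s
    rw [hscore, hscore, if_pos hs, if_neg hx] at h1
    omega
  · intro hx z
    rw [hscore, hscore, if_pos hx]
    split_ifs <;> omega
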